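/- Let H be a λ-intersecting k-uniform hypergraph with m edges and let μ = k − λ. Then every vertex v of H satisfies (deg(v) − μ)(μ + λm) − λ·deg(v)² ≤ 0. -/
import Mathlib


private lemma mv_sum_ind {V : Type*} [Fintype V] [DecidableEq V] (f g : Finset V) :
    ∑ w : V, ((if w ∈ f then (1:ℤ) else 0) * (if w ∈ g then 1 else 0))
      = ((f ∩ g).card : ℤ) := by
  have h : ∀ w : V, (if w ∈ f then (1:ℤ) else 0) * (if w ∈ g then 1 else 0)
      = if w ∈ f ∩ g then 1 else 0 := by
    intro w; by_cases h1 : w ∈ f <;> by_cases h2 : w ∈ g <;> simp [h1, h2]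
  rw [Finset.sum_congr rfl (fun w _ => h w), Finset.sum_boole]
  have he : Finset.filter (fun x => x ∈ f ∩ g) Finset.univ = f ∩ g := by
    ext w; simp
  rw [he]

private lemma mv_double {V : Type*} [Fintype V] [DecidableEq V]
    (S T : Finset (Finset V)) :
    ∑ w : V, ((S.filter (fun e => w ∈ e)).card : ℤ) * ((T.filter (fun e => w ∈ e)).card : ℤ)
      = ∑ f ∈ S, ∑ g ∈ T, ((f ∩ g).card : ℤ) := by
  have hS : ∀ w : V, ((S.filter (fun e => w ∈ e)).card : ℤ) = ∑ f ∈ S, (if w ∈ f then (1:ℤ) else 0) := by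
    intro w; rw [Finset.card_filter]; push_cast; rfl
  have hT : ∀ w : V, ((T.filter (fun e => w ∈ e)).card : ℤ) = ∑ g ∈ T, (if w ∈ g then (1:ℤ) else 0) := by
    intro w; rw [Finset.card_filter]; push_cast; rfl
  calc ∑ w : V, ((S.filter (fun e => w ∈ e)).card : ℤ) * ((T.filter (fun e => w ∈ e)).card : ℤ)
      = ∑ w : V, ∑ f ∈ S, ∑ g ∈ T, ((if w ∈ f then (1:ℤ) else 0) * (if w ∈ g then 1 else 0)) := by
        refine Finset.sum_congr rfl fun w _ => ?_
        rw [hS w, hT w, Finset.sum_mul]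
        exact Finset.sum_congr rfl fun f _ => Finset.mul_sum _ _ _
    _ = ∑ f ∈ S, ∑ g ∈ T, ∑ w : V, ((if w ∈ f then (1:ℤ) else 0) * (if w ∈ g then 1 else 0)) := by
        rw [Finset.sum_comm]
        exact Finset.sum_congr rfl fun f _ => Finset.sum_comm
    _ = ∑ f ∈ S, ∑ g ∈ T, ((f ∩ g).card : ℤ) :=
        Finset.sum_congr rfl fun f _ => Finset.sum_congr rfl fun g _ => mv_sum_ind f g


/-- McCarthy–Vanstone inequality: in a λ-intersecting k-uniform hypergraph with m
edges, every vertex v satisfies (deg(v) − μ)(μ + λm) − λ·deg(v)² ≤ 0 where μ = k − λ. -/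
theorem mccarthy_vanstone {V : Type*} [Fintype V] [DecidableEq V]
    (k lam m : ℕ) (hlam : 1 ≤ lam) (hlt : lam < k)
    (H : Finset (Finset V)) (hm : H.card = m)
    (hunif : ∀ e ∈ H, e.card = k)
    (hint : ∀ e ∈ H, ∀ f ∈ H, e ≠ f → (e ∩ f).card = lam) :
    ∀ v : V,
      (((H.filter (fun e => v ∈ e)).card : ℤ) - ((k : ℤ) - lam)) * (((k : ℤ) - lam) + lam * m)
        - lam * ((H.filter (fun e => v ∈ e)).card : ℤ) ^ 2 ≤ 0 := by
  intro v
  classical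
  set D : Finset (Finset V) := H.filter (fun e => v ∈ e) with hDdef
  have hDH : D ⊆ H := Finset.filter_subset _ _
  set d : ℤ := (D.card : ℤ) with hd
  set A : ℤ := ((k : ℤ) - lam) + lam * m with hA
  -- row sums
  have row : ∀ (S : Finset (Finset V)), S ⊆ H → ∀ f ∈ S,
      ∑ g ∈ S, ((f ∩ g).card : ℤ) = (k : ℤ) + ((S.card : ℤ) - 1) * lam := by
    intro S hS f hf
    rw [← Finset.add_sum_erase _ _ hf]
    have h1 : ((f ∩ f).card : ℤ) = k := by
      rw [Finset.inter_self]; exact_mod_cast hunif f (hS hf)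
    have h2 : ∀ g ∈ S.erase f, ((f ∩ g).card : ℤ) = lam := by
      intro g hg
      have := hint f (hS hf) g (hS (Finset.mem_of_mem_erase hg))
        (Ne.symm (Finset.ne_of_mem_erase hg))
      exact_mod_cast this
    rw [h1, Finset.sum_congr rfl h2, Finset.sum_const, Finset.card_erase_of_mem hf]
    have hc : 1 ≤ S.card := Finset.card_pos.mpr ⟨f, hf⟩
    rw [nsmul_eq_mul]
    push_cast [hc]
    ring
  -- the three double-counting values
  have S1 : ∑ w : V, ((D.filter (fun e => w ∈ e)).card : ℤ) * ((D.filter (fun e => w ∈ e)).card : ℤ)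
      = d * ((k : ℤ) + (d - 1) * lam) := by
    rw [mv_double]
    rw [Finset.sum_congr rfl (fun f hf => row D hDH f hf), Finset.sum_const, nsmul_eq_mul]
  have S2 : ∑ w : V, ((D.filter (fun e => w ∈ e)).card : ℤ) * ((H.filter (fun e => w ∈ e)).card : ℤ)
      = d * ((k : ℤ) + ((m : ℤ) - 1) * lam) := by
    rw [mv_double]
    rw [Finset.sum_congr rfl (fun f hf => row H (le_refl H) f (hDH hf)), Finset.sum_const,
      nsmul_eq_mul, hm]
  have S3 : ∑ w : V, ((H.filter (fun e => w ∈ e)).card : ℤ) * ((H.filter (fun e => w ∈ e)).card : ℤ)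
      = (m : ℤ) * ((k : ℤ) + ((m : ℤ) - 1) * lam) := by
    rw [mv_double]
    rw [Finset.sum_congr rfl (fun f hf => row H (le_refl H) f hf), Finset.sum_const,
      nsmul_eq_mul, hm]
  -- the quadratic form
  set t : V → ℤ := fun w =>
    A * ((D.filter (fun e => w ∈ e)).card : ℤ) - (lam * d) * ((H.filter (fun e => w ∈ e)).card : ℤ)
    with ht
  have expand : ∑ w : V, (t w) ^ 2
      = A ^ 2 * (∑ w : V, ((D.filter (fun e => w ∈ e)).card : ℤ) * ((D.filter (fun e => w ∈ e)).card : ℤ))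
        - 2 * A * (lam * d) * (∑ w : V, ((D.filter (fun e => w ∈ e)).card : ℤ) * ((H.filter (fun e => w ∈ e)).card : ℤ))
        + (lam * d) ^ 2 * (∑ w : V, ((H.filter (fun e => w ∈ e)).card : ℤ) * ((H.filter (fun e => w ∈ e)).card : ℤ)) := by
    rw [Finset.mul_sum, Finset.mul_sum, Finset.mul_sum, ← Finset.sum_sub_distrib,
      ← Finset.sum_add_distrib]
    exact Finset.sum_congr rfl fun w _ => by rw [ht]; ring
  have total : ∑ w : V, (t w) ^ 2 = ((k : ℤ) - lam) * A * (d * A - lam * d ^ 2) := by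
    rw [expand, S1, S2, S3, hA]; ring
  -- single term bound
  have hav : ((D.filter (fun e => v ∈ e)).card : ℤ) = d := by
    rw [hd]; congr 1
    rw [hDdef, Finset.filter_filter]
    simp
  have hbv : ((H.filter (fun e => v ∈ e)).card : ℤ) = d := by rw [hd, hDdef]
  have hsingle : (t v) ^ 2 ≤ ∑ w : V, (t w) ^ 2 :=
    Finset.single_le_sum (fun w _ => sq_nonneg (t w)) (Finset.mem_univ v)
  have htv : t v = A * d - (lam * d) * d := by rw [ht]; simp only []; rw [hav, hbv]
  rw [total, htv] at hsingle
  have hmu : (0 : ℤ) < (k : ℤ) - lam := by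
    have : (lam : ℤ) < k := by exact_mod_cast hlt
    linarith
  have hA0 : (0 : ℤ) < A := by
    have h1 : (0 : ℤ) ≤ (lam : ℤ) * m := by positivity
    rw [hA]; linarith
  nlinarith [hsingle, mul_pos hmu hA0, sq_nonneg (A * d - lam * d * d)]
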